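/- arXiv:1309.5314 — 2 statements merged into one kernel-verified Lean document; each statement's English description precedes it below -/
import Mathlib

section
/- For all integers r, s ∈ ℤ and every integer m ≥ 1, one has (r,m) ∼_H (s,m) if and only if there exists a natural number k with 0 ≤ k < m such that 2^m − 1 divides r·2^k − s. -/
/-- The ring of dyadic rationals `ℤ[1/2]`, as a subring of `ℚ`. -/
def DyadicQ : Subring ℚ := Subring.closure {(2:ℚ)⁻¹}

lemma DyadicQ.two_mem : (2:ℚ) ∈ DyadicQ := by
  have := add_mem (Subring.one_mem DyadicQ) (Subring.one_mem DyadicQ)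
  rwa [one_add_one_eq_two] at this

lemma DyadicQ.half_mem : (2:ℚ)⁻¹ ∈ DyadicQ := Subring.subset_closure rfl

/-- `2` as a unit of `ℤ[1/2]`. -/
def DyadicQ.two : DyadicQˣ where
  val := ⟨2, DyadicQ.two_mem⟩
  inv := ⟨(2:ℚ)⁻¹, DyadicQ.half_mem⟩
  val_inv := by ext; norm_num
  inv_val := by ext; norm_num

/-- The powers `2^m` for `m : ℤ`, as elements of `ℤ[1/2]`. -/
def pow2 (m : ℤ) : DyadicQ := ((DyadicQ.two ^ m : DyadicQˣ) : DyadicQ)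

lemma pow2_add (m q : ℤ) : pow2 (m + q) = pow2 m * pow2 q := by
  simp [pow2, zpow_add]

lemma pow2_zero : pow2 0 = 1 := by simp [pow2]

/-- The group `H = ℤ[1/2] ⋊ ℤ`, where `ℤ` acts by powers of `2`;
multiplication is `(r,m)·(s,q) = (r + 2^m·s, m+q)`. -/
@[ext] structure Hgrp where
  r : DyadicQ
  m : ℤ

instance : Mul Hgrp := ⟨fun x y => ⟨x.r + pow2 x.m * y.r, x.m + y.m⟩⟩
instance : One Hgrp := ⟨⟨0, 0⟩⟩
instance : Inv Hgrp := ⟨fun x => ⟨-(pow2 (-x.m) * x.r), -x.m⟩⟩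

lemma Hgrp.mul_def (x y : Hgrp) : x * y = ⟨x.r + pow2 x.m * y.r, x.m + y.m⟩ := rfl
lemma Hgrp.one_def : (1 : Hgrp) = ⟨0, 0⟩ := rfl
lemma Hgrp.inv_def (x : Hgrp) : x⁻¹ = ⟨-(pow2 (-x.m) * x.r), -x.m⟩ := rfl

instance : Group Hgrp where
  mul_assoc a b c := by
    simp only [Hgrp.mul_def, Hgrp.mk.injEq, pow2_add]
    constructor <;> ring
  one_mul a := by
    obtain ⟨r, m⟩ := a
    simp only [Hgrp.one_def, Hgrp.mul_def, Hgrp.mk.injEq, pow2_zero]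
    constructor <;> ring
  mul_one a := by
    obtain ⟨r, m⟩ := a
    simp only [Hgrp.one_def, Hgrp.mul_def, Hgrp.mk.injEq, pow2_zero]
    constructor <;> ring
  inv_mul_cancel a := by
    simp only [Hgrp.inv_def, Hgrp.mul_def, Hgrp.one_def, Hgrp.mk.injEq]
    constructor <;> ring

/-- Conjugacy in `H`. -/
def conjH (x y : Hgrp) : Prop := ∃ z : Hgrp, z * x * z⁻¹ = y

/-- The element `a = (1,0)` of `H`. -/
def aH : Hgrp := ⟨1, 0⟩
/-- The element `t = (0,1)` of `H`. -/
def tH : Hgrp := ⟨0, 1⟩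
lemma aH_zpow (n : ℤ) : aH ^ n = Hgrp.mk (n : DyadicQ) 0 := by
  induction n using Int.induction_on with
  | zero => simp [Hgrp.one_def]
  | succ k ih =>
      rw [zpow_add_one, ih]
      simp only [aH, Hgrp.mul_def, Hgrp.mk.injEq, pow2_zero]
      push_cast
      constructor <;> first | ring | simp
  | pred k ih =>
      rw [zpow_sub_one, ih]
      simp only [aH, Hgrp.inv_def, Hgrp.mul_def, Hgrp.mk.injEq, pow2_zero, neg_zero]
      push_cast
      constructor <;> first | ring | simp

lemma tH_zpow (n : ℤ) : tH ^ n = Hgrp.mk 0 n := by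
  induction n using Int.induction_on with
  | zero => simp [Hgrp.one_def]
  | succ k ih =>
      rw [zpow_add_one, ih]
      simp [tH, Hgrp.mul_def]
  | pred k ih =>
      rw [zpow_sub_one, ih]
      simp only [tH, Hgrp.inv_def, Hgrp.mul_def, Hgrp.mk.injEq]
      constructor <;> ring

lemma aH_zpow_injective : Function.Injective fun n : ℤ => aH ^ n := by
  intro x y h
  simp only [aH_zpow, Hgrp.mk.injEq] at h
  have : ((x : DyadicQ) : ℚ) = ((y : DyadicQ) : ℚ) := by rw [h.1]
  simpa using this

lemma tH_zpow_injective : Function.Injective fun n : ℤ => tH ^ n := by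
  intro x y h
  simp only [tH_zpow, Hgrp.mk.injEq] at h
  exact h.2

/-- The homomorphism `ℤ →* G` given by powers of `g`. -/
def zintHom {G : Type*} [Group G] (g : G) : Multiplicative ℤ →* G where
  toFun n := g ^ (Multiplicative.toAdd n)
  map_one' := by simp
  map_mul' x y := by simp [zpow_add]

/-- For `g` with `n ↦ g ^ n` injective, `⟨g⟩ ≅ ℤ`. -/
noncomputable def zpowMulEquiv {G : Type*} [Group G] (g : G)
    (hg : Function.Injective fun n : ℤ => g ^ n) :
    Multiplicative ℤ ≃* Subgroup.zpowers g := by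
  refine MulEquiv.ofBijective
    ((zintHom g).codRestrict (Subgroup.zpowers g).toSubmonoid
      (fun n => Subgroup.mem_zpowers_iff.mpr ⟨Multiplicative.toAdd n, rfl⟩)) ⟨?_, ?_⟩
  · intro x y h
    have : g ^ (Multiplicative.toAdd x) = g ^ (Multiplicative.toAdd y) :=
      congrArg Subtype.val h
    exact hg this
  · rintro ⟨x, hx⟩
    obtain ⟨n, hn⟩ := Subgroup.mem_zpowers_iff.mp hx
    exact ⟨Multiplicative.ofAdd n, Subtype.ext hn⟩

/-- The associated isomorphism `⟨a⟩ ≅ ⟨t⟩`, `a ↦ t`, of the HNN extension defining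
the Baumslag group. -/
noncomputable def φBS : Subgroup.zpowers aH ≃* Subgroup.zpowers tH :=
  (zpowMulEquiv aH aH_zpow_injective).symm.trans (zpowMulEquiv tH tH_zpow_injective)

/-- The Baumslag group `G(1,2)`, as HNN extension of `H = BS(1,2)` with stable letter `b`,
associated subgroups `⟨a⟩` and `⟨t⟩`, and associated isomorphism `a ↦ t`. -/
noncomputable abbrev BG := HNNExtension Hgrp (Subgroup.zpowers aH) (Subgroup.zpowers tH) φBS

/-- The embedding of `H` into the Baumslag group. -/
noncomputable def ι : Hgrp →* BG := HNNExtension.of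

/-- The stable letter `b` of the Baumslag group. -/
noncomputable def bBG : BG := HNNExtension.t

/-- Conjugacy in the Baumslag group `G(1,2)`. -/
def conjBG (x y : BG) : Prop := ∃ z : BG, z * x * z⁻¹ = y

lemma pow2_val (n : ℤ) : ((pow2 n : DyadicQ) : ℚ) = (2:ℚ) ^ n := by
  have h : ((Units.map (Subring.subtype DyadicQ).toMonoidHom (DyadicQ.two ^ n) : ℚˣ) : ℚ)
      = ((pow2 n : DyadicQ) : ℚ) := rfl
  rw [← h, map_zpow, Units.val_zpow_eq_zpow_val]
  norm_num [DyadicQ.two]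

lemma dyadic_rep (x : DyadicQ) : ∃ (a : ℤ) (j : ℕ), (x : ℚ) = a / 2^j := by
  obtain ⟨x, hx⟩ := x
  induction hx using Subring.closure_induction with
  | mem y hy => exact ⟨1, 1, by simp at hy; simp [hy]⟩
  | one => exact ⟨1, 0, by norm_num⟩
  | zero => exact ⟨0, 0, by norm_num⟩
  | add y z hy hz ihy ihz =>
      obtain ⟨a, j, (ha : y = _)⟩ := ihy
      obtain ⟨b, i, (hb : z = _)⟩ := ihz
      exact ⟨a * 2^i + b * 2^j, j + i, by
        show y + z = _; rw [ha, hb]; push_cast; field_simp; ring⟩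
  | neg y hy ihy =>
      obtain ⟨a, j, (ha : y = _)⟩ := ihy
      exact ⟨-a, j, by show -y = _; rw [ha]; push_cast; ring⟩
  | mul y z hy hz ihy ihz =>
      obtain ⟨a, j, (ha : y = _)⟩ := ihy
      obtain ⟨b, i, (hb : z = _)⟩ := ihz
      exact ⟨a * b, j + i, by
        show y * z = _; rw [ha, hb]; push_cast; field_simp; ring⟩

lemma pow_modEq (M : ℕ) (a : ℕ) : (2:ℤ)^a ≡ 2^(a % M) [ZMOD (2^M - 1)] := by
  conv_lhs => rw [← Nat.div_add_mod a M]
  rw [pow_add, pow_mul]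
  have h1 : ((2:ℤ)^M) ≡ 1 [ZMOD (2^M - 1)] := (Int.modEq_iff_dvd.mpr (by simp)).symm
  calc ((2:ℤ)^M)^(a/M) * 2^(a%M) ≡ 1^(a/M) * 2^(a%M) [ZMOD (2^M-1)] :=
        (h1.pow _).mul_right _
    _ = 2^(a%M) := by ring

theorem stmt3 (r s m : ℤ) (hm : 1 ≤ m) :
    conjH ⟨(r : DyadicQ), m⟩ ⟨(s : DyadicQ), m⟩ ↔
      ∃ k : ℕ, (k : ℤ) < m ∧ (2 ^ m.toNat - 1 : ℤ) ∣ r * 2 ^ k - s := by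
  set M : ℕ := m.toNat with hM
  have hMm : ((M : ℕ) : ℤ) = m := Int.toNat_of_nonneg (by linarith)
  have hM1 : 1 ≤ M := by omega
  have hm2 : (2:ℚ)^(m:ℤ) = 2^(M:ℕ) := by rw [← zpow_natCast (2:ℚ) M, hMm]
  have h2M1 : ((2:ℤ)^M) ≡ 1 [ZMOD (2^M - 1)] := (Int.modEq_iff_dvd.mpr (by simp)).symm
  constructor
  · rintro ⟨⟨c, n⟩, hz⟩
    simp only [Hgrp.mul_def, Hgrp.inv_def, Hgrp.mk.injEq] at hz
    have hq := congrArg (Subtype.val) hz.1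
    push_cast [pow2_val] at hq
    set C : ℚ := (c : ℚ) with hCdef
    have hq' : C + (2:ℚ)^(n:ℤ) * r - 2^(M:ℕ) * C = s := by
      rw [← hq, zpow_add₀ (two_ne_zero), zpow_neg, ← hm2]
      field_simp
      ring
    obtain ⟨a, j, hc⟩ := dyadic_rep c
    set J : ℕ := j + n.natAbs with hJ
    set e : ℕ := n.natAbs with he
    have hnJ : 0 ≤ n + (J:ℤ) := by
      push_cast [hJ]
      omega
    set N : ℕ := (n + J).toNat with hNdef
    have hNn : ((N:ℕ) : ℤ) = n + J := Int.toNat_of_nonneg hnJ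
    have hC : C * 2^(j:ℕ) = (a:ℚ) := by rw [hCdef, hc]; field_simp
    have hn2 : (2:ℚ)^(n:ℤ) * 2^(J:ℕ) = 2^(N:ℕ) := by
      rw [← zpow_natCast (2:ℚ) J, ← zpow_natCast (2:ℚ) N, ← zpow_add₀ (two_ne_zero), hNn]
    have he2 : (2:ℚ)^(e:ℕ) * 2^(j:ℕ) = 2^(J:ℕ) := by rw [← pow_add]; congr 1; omega
    have key : (r:ℚ)*2^N - s*2^J = ((2:ℚ)^M - 1)*(a*2^e) := by
      rw [← hq', ← hn2, ← he2, ← hC]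
      ring
    have hZ : r * 2^N - s * 2^J = (2^M - 1) * (a * 2^e) := by exact_mod_cast key
    set t : ℕ := M - J % M with ht
    refine ⟨(N + t) % M, ?_, ?_⟩
    · have : (N + t) % M < M := Nat.mod_lt _ (by omega)
      omega
    · have hmod : s * 2^J ≡ r * 2^N [ZMOD (2^M - 1)] :=
        Int.modEq_iff_dvd.mpr ⟨a * 2^e, hZ⟩
      have hJt0 : ∃ u : ℕ, J + t = M * u := by
        refine ⟨J / M + 1, ?_⟩
        have hdm := Nat.div_add_mod J M
        have hlt : J % M < M := Nat.mod_lt _ (by omega)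
        rw [Nat.mul_add, Nat.mul_one]
        omega
      obtain ⟨u, hu⟩ := hJt0
      have h2Jt : (2:ℤ)^(J+t) ≡ 1 [ZMOD (2^M-1)] := by
        rw [hu, pow_mul]
        calc ((2:ℤ)^M)^u ≡ 1^u [ZMOD (2^M-1)] := h2M1.pow u
          _ = 1 := one_pow u
      have chain : s ≡ r * 2^((N+t) % M) [ZMOD (2^M - 1)] := by
        calc (s:ℤ) = s * 1 := by ring
          _ ≡ s * 2^(J+t) [ZMOD (2^M-1)] := h2Jt.symm.mul_left s
          _ = (s * 2^J) * 2^t := by rw [pow_add]; ring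
          _ ≡ (r * 2^N) * 2^t [ZMOD (2^M-1)] := hmod.mul_right _
          _ = r * 2^(N+t) := by rw [pow_add]; ring
          _ ≡ r * 2^((N+t) % M) [ZMOD (2^M-1)] := (pow_modEq M (N+t)).mul_left r
      exact chain.dvd
  · rintro ⟨k, hk, d, hd⟩
    refine ⟨⟨(d : DyadicQ), (k : ℤ)⟩, ?_⟩
    simp only [Hgrp.mul_def, Hgrp.inv_def, Hgrp.mk.injEq]
    constructor
    · apply Subtype.ext
      push_cast [pow2_val]
      have hdQ : (r:ℚ)*2^(k:ℕ) - s = ((2:ℚ)^(M:ℕ) - 1) * d := by exact_mod_cast hd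
      have hkz : (2:ℚ)^((k:ℕ):ℤ) = 2^(k:ℕ) := zpow_natCast 2 k
      rw [zpow_add₀ (two_ne_zero), zpow_neg, hm2, hkz]
      have h2k : (2:ℚ)^(k:ℕ) ≠ 0 := by positivity
      field_simp
      linear_combination hdQ
    · ring
end

section
/- Let r, m ∈ ℤ with m ≠ 0 and suppose that (r,m) is not conjugate to (0,m) in H. Then for every element (s,q) ∈ H one has (r,m) ∼_{G(1,2)} (s,q) if and only if (r,m) ∼_H (s,q). -/
open HNNExtension

variable {G : Type*} [Group G]

/-- Word representing `(t^u g · ∏L) x (t^u g · ∏L)⁻¹ · k`. -/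
def Ew (u : ℤˣ) (g : G) : List (ℤˣ × G) → G → G → List (ℤˣ × G)
  | [], x, k => [(u, g * x * g⁻¹), (-u, k)]
  | (p :: L), x, k => (u, g) :: (Ew p.1 p.2 L x g⁻¹ ++ [(-u, k)])

lemma Ew_ne_nil (u : ℤˣ) (g : G) (L : List (ℤˣ × G)) (x k : G) :
    Ew u g L x k ≠ [] := by
  cases L <;> simp [Ew]

lemma Ew_head (u : ℤˣ) (g : G) (L : List (ℤˣ × G)) (x k : G) :
    ∃ c, (Ew u g L x k).head? = some (u, c) := by
  cases L <;> exact ⟨_, rfl⟩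

lemma Ew_getLast (u : ℤˣ) (g : G) (L : List (ℤˣ × G)) (x k : G) :
    (Ew u g L x k).getLast? = some (-u, k) := by
  cases L with
  | nil => rfl
  | cons p L =>
      show ((((u, g) :: Ew p.1 p.2 L x g⁻¹)) ++ [(-u, k)]).getLast? = some (-u, k)
      rw [List.getLast?_concat]

lemma Ew_prod {A B : Subgroup G} (φ : A ≃* B) (u : ℤˣ) (g : G) (L : List (ℤˣ × G)) (x k : G) :
    ((Ew u g L x k).map (fun p => (t : HNNExtension G A B φ) ^ (p.1 : ℤ) * of p.2)).prod
      = t ^ (u : ℤ) * of g * (L.map (fun p => (t : HNNExtension G A B φ) ^ (p.1 : ℤ) * of p.2)).prod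
        * of x *
        ((L.map (fun p => (t : HNNExtension G A B φ) ^ (p.1 : ℤ) * of p.2)).prod)⁻¹ * (of g)⁻¹
        * t ^ (-(u : ℤ)) * of k := by
  induction L generalizing u g k with
  | nil =>
    simp only [Ew, List.map_cons, List.map_nil, List.prod_cons, List.prod_nil,
      map_mul, map_inv, Units.val_neg]
    group
  | cons p L ih =>
    simp only [Ew, List.map_cons, List.map_append, List.prod_cons, List.prod_append,
      List.map_nil, List.prod_nil, ih, map_mul, map_inv, mul_inv_rev, Units.val_neg]
    group

lemma int_units_cases (u v : ℤˣ) (h : u ≠ v) : u = -v := by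
  rcases Int.units_eq_one_or u with rfl | rfl <;>
    rcases Int.units_eq_one_or v with rfl | rfl <;> simp_all

lemma Ew_chain {A B : Subgroup G} (x : G)
    (hx : ∀ (h : G) (v : ℤˣ), h * x * h⁻¹ ∉ toSubgroup A B v)
    (L : List (ℤˣ × G)) (u : ℤˣ) (g k : G)
    (hc : ((u, g) :: L).Chain' (fun a b => a.2 ∈ toSubgroup A B a.1 → a.1 = b.1)) :
    (Ew u g L x k).Chain' (fun a b => a.2 ∈ toSubgroup A B a.1 → a.1 = b.1) := by
  unfold List.Chain' at hc ⊢
  induction L generalizing u g k with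
  | nil =>
    simp only [Ew, List.isChain_cons_cons, List.isChain_singleton, and_true]
    intro hmem
    exact absurd hmem (hx g u)
  | cons p L ih =>
    rw [List.isChain_cons] at hc
    obtain ⟨hc1, hc2⟩ := hc
    have hIH := ih p.1 p.2 g⁻¹ hc2
    rw [Ew, List.isChain_cons]
    constructor
    · intro y hy hgu
      obtain ⟨c, hcc⟩ := Ew_head p.1 p.2 L x (g⁻¹ : G)
      rw [List.head?_append_of_ne_nil _ (Ew_ne_nil p.1 p.2 L x g⁻¹), hcc] at hy
      obtain rfl := Option.some_injective _ hy
      exact hc1 (p.1, p.2) (by simp) hgu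
    · rw [List.isChain_append]
      refine ⟨hIH, List.isChain_singleton _, ?_⟩
      intro a ha b hb
      rw [Ew_getLast] at ha
      have ha' : (-p.1, g⁻¹) = a := by simpa using ha
      have hb' : (-u, k) = b := by simpa using hb
      subst ha' hb'
      intro hmem
      show -p.1 = -u
      by_contra hne
      have h1 : -p.1 = -(-u) := int_units_cases _ _ hne
      rw [neg_neg] at h1
      have hmem' : g⁻¹ ∈ toSubgroup A B (-p.1) := hmem
      rw [h1, inv_mem_iff] at hmem'
      have hu : u = p.1 := hc1 p (by simp) hmem'
      rw [← hu] at h1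
      exact absurd h1 (by rcases Int.units_eq_one_or u with h | h <;> simp [h])

lemma conj_of_of_eq_of {A B : Subgroup G} {φ : A ≃* B} {x y : G}
    (hx : ∀ (h : G) (v : ℤˣ), h * x * h⁻¹ ∉ toSubgroup A B v)
    {z : HNNExtension G A B φ}
    (hz : z * of x * z⁻¹ = of y) :
    ∃ h : G, h * x * h⁻¹ = y := by
  obtain ⟨d⟩ := NormalWord.TransversalPair.nonempty G A B
  set w : NormalWord d := z • NormalWord.empty with hw_def
  have hw : w.prod φ = z := by
    rw [hw_def, NormalWord.prod_smul, NormalWord.prod_empty, mul_one]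
  rcases hL : w.toList with _ | ⟨⟨u, g⟩, L⟩
  · refine ⟨w.head, of_injective (φ := φ) ?_⟩
    have hzz : z = of w.head := by
      rw [← hw]
      simp [NormalWord.ReducedWord.prod, hL]
    rw [map_mul, map_mul, map_inv, ← hzz, hz]
  · have hchain := w.chain
    rw [hL] at hchain
    set V : NormalWord.ReducedWord G A B :=
      ⟨w.head, Ew u g L x w.head⁻¹, Ew_chain x hx L u g w.head⁻¹ hchain⟩ with hV_def
    have hzz : z = of w.head *
        ((t : HNNExtension G A B φ) ^ (u : ℤ) * of g *
          (L.map (fun p => (t : HNNExtension G A B φ) ^ (p.1 : ℤ) * of p.2)).prod) := by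
      rw [← hw]
      simp [NormalWord.ReducedWord.prod, hL, mul_assoc]
    have hVprod : V.prod φ = of y := by
      rw [← hz, hzz]
      show of w.head * _ = _
      rw [Ew_prod]
      simp only [map_inv, mul_inv_rev]
      group
    have hnil := ReducedWord.toList_eq_nil_of_mem_of_range φ V ⟨y, hVprod.symm⟩
    exact absurd hnil (Ew_ne_nil u g L x w.head⁻¹)


lemma hx_main (r : DyadicQ) (m : ℤ) (hm : m ≠ 0)
    (h : ¬ conjH ⟨r, m⟩ ⟨0, m⟩) (z : Hgrp) (v : ℤˣ) :
    z * Hgrp.mk r m * z⁻¹ ∉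
      HNNExtension.toSubgroup (Subgroup.zpowers aH) (Subgroup.zpowers tH) v := by
  intro hv
  have hmc : (z * Hgrp.mk r m * z⁻¹).m = m := by
    simp only [Hgrp.mul_def, Hgrp.inv_def]
    omega
  rcases Int.units_eq_one_or v with rfl | rfl
  · rw [HNNExtension.toSubgroup_one] at hv
    obtain ⟨n, hn⟩ := Subgroup.mem_zpowers_iff.mp hv
    rw [aH_zpow] at hn
    rw [← hn] at hmc
    exact hm hmc.symm
  · rw [HNNExtension.toSubgroup_neg_one] at hv
    obtain ⟨n, hn⟩ := Subgroup.mem_zpowers_iff.mp hv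
    rw [tH_zpow] at hn
    have hnm : n = m := by rw [← hn] at hmc; exact hmc
    exact h ⟨z, by rw [← hn, hnm]⟩

theorem stmt6 (r m : ℤ) (hm : m ≠ 0)
    (h : ¬ conjH ⟨(r : DyadicQ), m⟩ ⟨0, m⟩) (s : DyadicQ) (q : ℤ) :
    conjBG (ι ⟨(r : DyadicQ), m⟩) (ι ⟨s, q⟩) ↔ conjH ⟨(r : DyadicQ), m⟩ ⟨s, q⟩ := by
  constructor
  · rintro ⟨z, hz⟩
    exact conj_of_of_eq_of (φ := φBS) (hx_main (r : DyadicQ) m hm h) hz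
  · rintro ⟨z, hz⟩
    exact ⟨ι z, by rw [← map_inv, ← map_mul, ← map_mul, hz]⟩
end
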